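/- Let f : ℝ² → ℍ be integrable. Then for all x1, x2 ∈ ℝ and all s1, s2 > 0, the filtered signal f_Q satisfies the right Cauchy–Riemann equation in the pair (x2, s2): (∂/∂x2) f_Q(x1,x2,s1,s2) + ((∂/∂s2) f_Q(x1,x2,s1,s2)) · j = 0. -/

import Mathlib

open MeasureTheory Real Filter
open scoped Quaternion ENNReal

/-- The quaternion imaginary unit `i`. -/
noncomputable def qi : ℍ[ℝ] := ⟨0, 1, 0, 0⟩

/-- The quaternion imaginary unit `j`. -/
noncomputable def qj : ℍ[ℝ] := ⟨0, 0, 1, 0⟩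

/-- `exp (i t) = cos t + i sin t` as a quaternion. -/
noncomputable def expI (t : ℝ) : ℍ[ℝ] := ⟨Real.cos t, Real.sin t, 0, 0⟩

/-- `exp (j t) = cos t + j sin t` as a quaternion. -/
noncomputable def expJ (t : ℝ) : ℍ[ℝ] := ⟨Real.cos t, 0, Real.sin t, 0⟩

/-- The two-sided quaternion Fourier transform of `f : ℝ² → ℍ`:
`F[f](w₁,w₂) = (1/(2π)) ∫ exp(-i w₁ x₁) f(x) exp(-j w₂ x₂) dx`. -/
noncomputable def QFT (f : ℝ × ℝ → ℍ[ℝ]) (w₁ w₂ : ℝ) : ℍ[ℝ] :=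
  (1 / (2 * π)) • ∫ x : ℝ × ℝ, expI (-(w₁ * x.1)) * f x * expJ (-(w₂ * x.2))

/-- The quaternion Hardy filter system function
`H₃(w₁,w₂,s₁,s₂) = e^{-|w₁|s₁} e^{-|w₂|s₂} (1+sgn w₁)(1+sgn w₂)`. -/
noncomputable def H3 (w₁ w₂ s₁ s₂ : ℝ) : ℝ :=
  Real.exp (-|w₁| * s₁) * Real.exp (-|w₂| * s₂) * (1 + Real.sign w₁) * (1 + Real.sign w₂)

/-- The filtered signal `f_Q(x₁,x₂,s₁,s₂) =
(1/(2π)) ∫ exp(i w₁ x₁) H₃(w₁,w₂,s₁,s₂) F[f](w₁,w₂) exp(j w₂ x₂) dw`. -/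
noncomputable def fQ (f : ℝ × ℝ → ℍ[ℝ]) (x₁ x₂ s₁ s₂ : ℝ) : ℍ[ℝ] :=
  (1 / (2 * π)) • ∫ w : ℝ × ℝ,
    expI (w.1 * x₁) * (H3 w.1 w.2 s₁ s₂ • QFT f w.1 w.2) * expJ (w.2 * x₂)

/-! ### Auxiliary lemmas -/

section Aux

open Set

lemma expI_re (t : ℝ) : (expI t).re = Real.cos t := rfl
lemma expI_imI (t : ℝ) : (expI t).imI = Real.sin t := rfl
lemma expI_imJ (t : ℝ) : (expI t).imJ = 0 := rfl
lemma expI_imK (t : ℝ) : (expI t).imK = 0 := rfl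
lemma expJ_re (t : ℝ) : (expJ t).re = Real.cos t := rfl
lemma expJ_imI (t : ℝ) : (expJ t).imI = 0 := rfl
lemma expJ_imJ (t : ℝ) : (expJ t).imJ = Real.sin t := rfl
lemma expJ_imK (t : ℝ) : (expJ t).imK = 0 := rfl
lemma qi_re : qi.re = 0 := rfl
lemma qi_imI : qi.imI = 1 := rfl
lemma qi_imJ : qi.imJ = 0 := rfl
lemma qi_imK : qi.imK = 0 := rfl
lemma qj_re : qj.re = 0 := rfl
lemma qj_imI : qj.imI = 0 := rfl
lemma qj_imJ : qj.imJ = 1 := rfl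
lemma qj_imK : qj.imK = 0 := rfl

lemma norm_of_normSq_one {q : ℍ[ℝ]} (h : Quaternion.normSq q = 1) : ‖q‖ = 1 := by
  have h2 : ‖q‖ * ‖q‖ = 1 := by rw [← Quaternion.normSq_eq_norm_mul_self, h]
  nlinarith [norm_nonneg q]

lemma norm_expI (t : ℝ) : ‖expI t‖ = 1 := by
  refine norm_of_normSq_one ?_
  simp [expI_re, expI_imI, expI_imJ, expI_imK, Quaternion.normSq_def', Real.cos_sq_add_sin_sq]

lemma norm_expJ (t : ℝ) : ‖expJ t‖ = 1 := by
  refine norm_of_normSq_one ?_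
  simp [expJ_re, expJ_imI, expJ_imJ, expJ_imK, Quaternion.normSq_def', Real.cos_sq_add_sin_sq]

lemma norm_qj : ‖qj‖ = 1 := by
  refine norm_of_normSq_one ?_
  simp [qj_re, qj_imI, qj_imJ, qj_imK, Quaternion.normSq_def']

lemma expI_eq (t : ℝ) : expI t = Real.cos t • (1 : ℍ[ℝ]) + Real.sin t • qi := by
  ext <;> simp [expI_re, expI_imI, expI_imJ, expI_imK, qi_re, qi_imI, qi_imJ, qi_imK]

lemma expJ_eq (t : ℝ) : expJ t = Real.cos t • (1 : ℍ[ℝ]) + Real.sin t • qj := by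
  ext <;> simp [expJ_re, expJ_imI, expJ_imJ, expJ_imK, qj_re, qj_imI, qj_imJ, qj_imK]

lemma continuous_expI : Continuous expI := by
  simp only [funext expI_eq]; fun_prop

lemma continuous_expJ : Continuous expJ := by
  simp only [funext expJ_eq]; fun_prop

lemma qj_mul_qj : qj * qj = (-1 : ℍ[ℝ]) := by
  ext <;> simp [qj_re, qj_imI, qj_imJ, qj_imK]

lemma hasDerivAt_expJ (a x : ℝ) :
    HasDerivAt (fun t => expJ (a * t)) (a • (expJ (a * x) * qj)) x := by
  have h1 : HasDerivAt (fun t : ℝ => a * t) a x := by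
    simpa using (hasDerivAt_id x).const_mul a
  have hc : HasDerivAt (fun t : ℝ => Real.cos (a * t)) (-Real.sin (a * x) * a) x :=
    (Real.hasDerivAt_cos (a * x)).comp x h1
  have hs : HasDerivAt (fun t : ℝ => Real.sin (a * t)) (Real.cos (a * x) * a) x :=
    (Real.hasDerivAt_sin (a * x)).comp x h1
  have key := (hc.smul_const (1 : ℍ[ℝ])).add (hs.smul_const qj)
  simp only [funext expJ_eq] at key ⊢
  refine key.congr_deriv ?_
  rw [add_mul, smul_mul_assoc, smul_mul_assoc, one_mul, qj_mul_qj]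
  module

lemma measurable_sign : Measurable Real.sign := by
  unfold Real.sign
  exact Measurable.ite measurableSet_Iio measurable_const
    (Measurable.ite (measurableSet_Ioi (a := (0:ℝ))) measurable_const measurable_const)

lemma integrable_abs_pow_exp (n : ℕ) {s : ℝ} (hs : 0 < s) :
    Integrable (fun x : ℝ => |x| ^ n * Real.exp (-|x| * s)) := by
  have hIoi : IntegrableOn (fun x : ℝ => |x| ^ n * Real.exp (-|x| * s)) (Ioi 0) := by
    have h := integrableOn_rpow_mul_exp_neg_mul_rpow (p := 1) (s := (n : ℝ)) (b := s)
      (lt_of_lt_of_le neg_one_lt_zero (Nat.cast_nonneg n)) one_pos hs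
    refine h.congr_fun ?_ measurableSet_Ioi
    intro x hx
    have hx0 : (0:ℝ) < x := hx
    simp only [Real.rpow_one, Real.rpow_natCast]
    rw [abs_of_pos hx0, neg_mul, neg_mul, mul_comm s x]
  rw [← integrableOn_univ, ← Iio_union_Ici (a := (0:ℝ)), integrableOn_union,
    integrableOn_Ici_iff_integrableOn_Ioi]
  refine ⟨?_, hIoi⟩
  rw [← (Measure.measurePreserving_neg (volume : Measure ℝ)).integrableOn_comp_preimage
      (Homeomorph.neg ℝ).measurableEmbedding]
  simp only [Function.comp_def, abs_neg, neg_preimage, neg_Iio, neg_zero]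
  exact hIoi

lemma integrable_exp_neg_abs_mul {s : ℝ} (hs : 0 < s) :
    Integrable (fun x : ℝ => Real.exp (-|x| * s)) := by
  simpa using integrable_abs_pow_exp 0 hs

lemma integrable_abs_mul_exp_neg_abs_mul {s : ℝ} (hs : 0 < s) :
    Integrable (fun x : ℝ => |x| * Real.exp (-|x| * s)) := by
  simpa using integrable_abs_pow_exp 1 hs

lemma continuous_QFT (f : ℝ × ℝ → ℍ[ℝ]) (hf : Integrable f) :
    Continuous fun w : ℝ × ℝ => QFT f w.1 w.2 := by
  simp only [QFT]
  refine Continuous.const_smul (M := ℝ) ?_ _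
  refine continuous_of_dominated (bound := fun x => ‖f x‖) ?_ ?_ hf.norm ?_
  · intro w
    exact (((continuous_expI.comp ((continuous_const.mul continuous_fst).neg)).aestronglyMeasurable.mul
      hf.1).mul (continuous_expJ.comp ((continuous_const.mul continuous_snd).neg)).aestronglyMeasurable)
  · intro w
    filter_upwards with x
    rw [norm_mul, norm_mul, norm_expI, norm_expJ, one_mul, mul_one]
  · filter_upwards with x
    exact ((continuous_expI.comp ((continuous_fst.mul continuous_const).neg)).mul
      continuous_const).mul (continuous_expJ.comp ((continuous_snd.mul continuous_const).neg))

lemma H3_abs_le (w₁ w₂ t₁ t₂ : ℝ) :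
    |H3 w₁ w₂ t₁ t₂| ≤ 4 * (Real.exp (-|w₁| * t₁) * Real.exp (-|w₂| * t₂)) := by
  have h1 : |1 + Real.sign w₁| ≤ 2 := by
    rcases Real.sign_apply_eq w₁ with h | h | h <;> rw [h] <;> norm_num
  have h2 : |1 + Real.sign w₂| ≤ 2 := by
    rcases Real.sign_apply_eq w₂ with h | h | h <;> rw [h] <;> norm_num
  have e1 := (Real.exp_pos (-|w₁| * t₁)).le
  have e2 := (Real.exp_pos (-|w₂| * t₂)).le
  have hab : |1 + Real.sign w₁| * |1 + Real.sign w₂| ≤ 4 := by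
    nlinarith [abs_nonneg (1 + Real.sign w₁), abs_nonneg (1 + Real.sign w₂)]
  calc |H3 w₁ w₂ t₁ t₂|
      = (Real.exp (-|w₁| * t₁) * Real.exp (-|w₂| * t₂)) *
        (|1 + Real.sign w₁| * |1 + Real.sign w₂|) := by
        rw [H3, abs_mul, abs_mul, abs_mul, abs_of_nonneg (Real.exp_pos _).le,
          abs_of_nonneg (Real.exp_pos _).le]
        ring
    _ ≤ (Real.exp (-|w₁| * t₁) * Real.exp (-|w₂| * t₂)) * 4 :=
        mul_le_mul_of_nonneg_left hab (mul_nonneg e1 e2)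
    _ = 4 * (Real.exp (-|w₁| * t₁) * Real.exp (-|w₂| * t₂)) := by ring

lemma H3_of_neg (w₁ : ℝ) {w₂ : ℝ} (h : w₂ < 0) (t₁ t₂ : ℝ) : H3 w₁ w₂ t₁ t₂ = 0 := by
  rw [H3, Real.sign_of_neg h]
  ring

lemma hasDerivAt_H3 (w₁ w₂ s₁ t : ℝ) :
    HasDerivAt (fun u => H3 w₁ w₂ s₁ u) (-|w₂| * H3 w₁ w₂ s₁ t) t := by
  have h0 : HasDerivAt (fun u : ℝ => -|w₂| * u) (-|w₂|) t := by
    simpa using (hasDerivAt_id t).const_mul (-|w₂|)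
  have h1 : HasDerivAt (fun u => Real.exp (-|w₂| * u)) (Real.exp (-|w₂| * t) * -|w₂|) t := h0.exp
  have key := ((h1.const_mul (Real.exp (-|w₁| * s₁))).mul_const
    (1 + Real.sign w₁)).mul_const (1 + Real.sign w₂)
  have : HasDerivAt (fun u => H3 w₁ w₂ s₁ u)
      (Real.exp (-|w₁| * s₁) * (Real.exp (-|w₂| * t) * -|w₂|) * (1 + Real.sign w₁) *
        (1 + Real.sign w₂)) t := by
    simpa only [H3] using key
  convert this using 1
  rw [H3]; ring

lemma measurable_H3 (s₁ u : ℝ) : Measurable fun w : ℝ × ℝ => H3 w.1 w.2 s₁ u := by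
  unfold H3
  exact ((((measurable_fst.abs.neg.mul_const s₁).exp.mul
    ((measurable_snd.abs.neg.mul_const u).exp)).mul
    (measurable_const.add (measurable_sign.comp measurable_fst))).mul
    (measurable_const.add (measurable_sign.comp measurable_snd)))

end Aux

set_option maxHeartbeats 2000000 in
/-- For integrable `f : ℝ² → ℍ`, the filtered signal `f_Q` satisfies the
right Cauchy–Riemann equation in the pair `(x₂, s₂)`:
`∂f_Q/∂x₂ + (∂f_Q/∂s₂) j = 0` for all `x₁ x₂` and `s₁, s₂ > 0`. -/
theorem fQ_right_cauchy_riemann (f : ℝ × ℝ → ℍ[ℝ]) (hf : Integrable f)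
    (x₁ x₂ s₁ s₂ : ℝ) (hs₁ : 0 < s₁) (hs₂ : 0 < s₂) :
    deriv (fun t => fQ f x₁ t s₁ s₂) x₂ + deriv (fun t => fQ f x₁ x₂ s₁ t) s₂ * qj = 0 := by
  classical
  set c : ℝ := 1 / (2 * π) with hc
  set K : ℝ := ‖c‖ * ∫ x : ℝ × ℝ, ‖f x‖ with hKdef
  have hK0 : 0 ≤ K :=
    mul_nonneg (norm_nonneg _) (integral_nonneg fun x => norm_nonneg _)
  have hQle : ∀ w₁ w₂ : ℝ, ‖QFT f w₁ w₂‖ ≤ K := by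
    intro w₁ w₂
    rw [QFT, norm_smul]
    refine mul_le_mul_of_nonneg_left ?_ (norm_nonneg _)
    calc ‖∫ x : ℝ × ℝ, expI (-(w₁ * x.1)) * f x * expJ (-(w₂ * x.2))‖
        ≤ ∫ x : ℝ × ℝ, ‖expI (-(w₁ * x.1)) * f x * expJ (-(w₂ * x.2))‖ :=
          norm_integral_le_integral_norm _
      _ = ∫ x : ℝ × ℝ, ‖f x‖ := by
          congr 1; funext x
          rw [norm_mul, norm_mul, norm_expI, norm_expJ, one_mul, mul_one]
  have hQcont := continuous_QFT f hf
  -- the "core" function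
  set P : ℝ × ℝ → ℍ[ℝ] := fun w => expI (w.1 * x₁) * QFT f w.1 w.2 with hP
  have hPcont : Continuous P :=
    (continuous_expI.comp (continuous_fst.mul continuous_const)).mul hQcont
  have hPle : ∀ w : ℝ × ℝ, ‖P w‖ ≤ K := by
    intro w
    rw [hP]
    calc ‖expI (w.1 * x₁) * QFT f w.1 w.2‖ = ‖QFT f w.1 w.2‖ := by
          rw [norm_mul, norm_expI, one_mul]
      _ ≤ K := hQle _ _
  -- rewriting fQ
  have hfQ1 : ∀ t, fQ f x₁ t s₁ s₂
      = c • ∫ w : ℝ × ℝ, H3 w.1 w.2 s₁ s₂ • (P w * expJ (w.2 * t)) := by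
    intro t
    simp only [fQ, mul_smul_comm, smul_mul_assoc, hP, hc, mul_assoc]
  have hfQ2 : ∀ t, fQ f x₁ x₂ s₁ t
      = c • ∫ w : ℝ × ℝ, H3 w.1 w.2 s₁ t • (P w * expJ (w.2 * x₂)) := by
    intro t
    simp only [fQ, mul_smul_comm, smul_mul_assoc, hP, hc, mul_assoc]
  -- derivative in x₂
  set F₁' : ℝ × ℝ → ℍ[ℝ] :=
    fun w => H3 w.1 w.2 s₁ s₂ • (P w * (w.2 • (expJ (w.2 * x₂) * qj))) with hF₁'
  have hD1 : Integrable F₁' (volume : Measure (ℝ × ℝ)) ∧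
      HasDerivAt (fun t => ∫ w : ℝ × ℝ, H3 w.1 w.2 s₁ s₂ • (P w * expJ (w.2 * t)))
        (∫ w : ℝ × ℝ, F₁' w) x₂ := by
    have hmeas : ∀ t : ℝ, AEStronglyMeasurable
        (fun w : ℝ × ℝ => H3 w.1 w.2 s₁ s₂ • (P w * expJ (w.2 * t))) volume := by
      intro t
      exact (measurable_H3 s₁ s₂).aestronglyMeasurable.smul
        ((hPcont.mul (continuous_expJ.comp (continuous_snd.mul continuous_const))).aestronglyMeasurable)
    have hbound0 : Integrable (fun w : ℝ × ℝ =>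
        (4 * K) * (Real.exp (-|w.1| * s₁) * Real.exp (-|w.2| * s₂))) volume := by
      rw [Measure.volume_eq_prod]
      exact ((integrable_exp_neg_abs_mul hs₁).mul_prod (integrable_exp_neg_abs_mul hs₂)).const_mul _
    have hint : Integrable
        (fun w : ℝ × ℝ => H3 w.1 w.2 s₁ s₂ • (P w * expJ (w.2 * x₂))) volume := by
      refine hbound0.mono' (hmeas x₂) ?_
      filter_upwards with w
      simp only [norm_smul, norm_mul, norm_expI, norm_expJ, norm_qj, Real.norm_eq_abs,
        one_mul, mul_one]
      calc |H3 w.1 w.2 s₁ s₂| * ‖P w‖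
          ≤ (4 * (Real.exp (-|w.1| * s₁) * Real.exp (-|w.2| * s₂))) * K :=
            mul_le_mul (H3_abs_le _ _ _ _) (hPle w) (norm_nonneg _)
              (by positivity)
        _ = (4 * K) * (Real.exp (-|w.1| * s₁) * Real.exp (-|w.2| * s₂)) := by ring
    have hbound1 : Integrable (fun w : ℝ × ℝ =>
        (4 * K) * (Real.exp (-|w.1| * s₁) * (|w.2| * Real.exp (-|w.2| * s₂)))) volume := by
      rw [Measure.volume_eq_prod]
      exact ((integrable_exp_neg_abs_mul hs₁).mul_prod
        (integrable_abs_mul_exp_neg_abs_mul hs₂)).const_mul _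
    have hF'meas : AEStronglyMeasurable F₁' volume := by
      rw [hF₁']
      exact (measurable_H3 s₁ s₂).aestronglyMeasurable.smul
        ((hPcont.mul ((continuous_snd.smul
          ((continuous_expJ.comp (continuous_snd.mul continuous_const)).mul
            continuous_const)))).aestronglyMeasurable)
    have := hasDerivAt_integral_of_dominated_loc_of_deriv_le (𝕜 := ℝ)
      (F := fun t (w : ℝ × ℝ) => H3 w.1 w.2 s₁ s₂ • (P w * expJ (w.2 * t)))
      (F' := fun t (w : ℝ × ℝ) => H3 w.1 w.2 s₁ s₂ • (P w * (w.2 • (expJ (w.2 * t) * qj))))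
      (x₀ := x₂) (s := Metric.ball x₂ 1) (Metric.ball_mem_nhds x₂ one_pos)
      (Eventually.of_forall hmeas) hint ?_ ?_ hbound1 ?_
    · exact this
    · exact (measurable_H3 s₁ s₂).aestronglyMeasurable.smul
        ((hPcont.mul ((continuous_snd.smul
          ((continuous_expJ.comp (continuous_snd.mul continuous_const)).mul
            continuous_const)))).aestronglyMeasurable)
    · filter_upwards with w
      intro t _
      simp only [norm_smul, norm_mul, norm_expI, norm_expJ, norm_qj, Real.norm_eq_abs,
        one_mul, mul_one]
      calc |H3 w.1 w.2 s₁ s₂| * (‖P w‖ * |w.2|)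
          ≤ (4 * (Real.exp (-|w.1| * s₁) * Real.exp (-|w.2| * s₂))) * (K * |w.2|) := by
            refine mul_le_mul (H3_abs_le _ _ _ _) ?_ (by positivity) (by positivity)
            exact mul_le_mul_of_nonneg_right (hPle w) (abs_nonneg _)
        _ = (4 * K) * (Real.exp (-|w.1| * s₁) * (|w.2| * Real.exp (-|w.2| * s₂))) := by ring
    · filter_upwards with w
      intro t _
      exact ((hasDerivAt_expJ w.2 t).const_mul (P w)).const_smul (H3 w.1 w.2 s₁ s₂)
  -- derivative in s₂
  set F₂' : ℝ × ℝ → ℍ[ℝ] :=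
    fun w => (-|w.2| * H3 w.1 w.2 s₁ s₂) • (P w * expJ (w.2 * x₂)) with hF₂'
  have hD2 : Integrable F₂' (volume : Measure (ℝ × ℝ)) ∧
      HasDerivAt (fun t => ∫ w : ℝ × ℝ, H3 w.1 w.2 s₁ t • (P w * expJ (w.2 * x₂)))
        (∫ w : ℝ × ℝ, F₂' w) s₂ := by
    have hmeas : ∀ t : ℝ, AEStronglyMeasurable
        (fun w : ℝ × ℝ => H3 w.1 w.2 s₁ t • (P w * expJ (w.2 * x₂))) volume := by
      intro t
      exact (measurable_H3 s₁ t).aestronglyMeasurable.smul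
        ((hPcont.mul (continuous_expJ.comp (continuous_snd.mul continuous_const))).aestronglyMeasurable)
    have hbound0 : Integrable (fun w : ℝ × ℝ =>
        (4 * K) * (Real.exp (-|w.1| * s₁) * Real.exp (-|w.2| * s₂))) volume := by
      rw [Measure.volume_eq_prod]
      exact ((integrable_exp_neg_abs_mul hs₁).mul_prod (integrable_exp_neg_abs_mul hs₂)).const_mul _
    have hint : Integrable
        (fun w : ℝ × ℝ => H3 w.1 w.2 s₁ s₂ • (P w * expJ (w.2 * x₂))) volume := by
      refine hbound0.mono' (hmeas s₂) ?_
      filter_upwards with w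
      simp only [norm_smul, norm_mul, norm_expI, norm_expJ, norm_qj, Real.norm_eq_abs,
        one_mul, mul_one]
      calc |H3 w.1 w.2 s₁ s₂| * ‖P w‖
          ≤ (4 * (Real.exp (-|w.1| * s₁) * Real.exp (-|w.2| * s₂))) * K :=
            mul_le_mul (H3_abs_le _ _ _ _) (hPle w) (norm_nonneg _) (by positivity)
        _ = (4 * K) * (Real.exp (-|w.1| * s₁) * Real.exp (-|w.2| * s₂)) := by ring
    have hs2' : 0 < s₂ / 2 := by linarith
    have hbound2 : Integrable (fun w : ℝ × ℝ =>
        (4 * K) * (Real.exp (-|w.1| * s₁) * (|w.2| * Real.exp (-|w.2| * (s₂ / 2))))) volume := by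
      rw [Measure.volume_eq_prod]
      exact ((integrable_exp_neg_abs_mul hs₁).mul_prod
        (integrable_abs_mul_exp_neg_abs_mul hs2')).const_mul _
    have hF'meas : AEStronglyMeasurable F₂' volume := by
      rw [hF₂']
      exact ((measurable_snd.abs.neg.mul (measurable_H3 s₁ s₂))).aestronglyMeasurable.smul
        ((hPcont.mul (continuous_expJ.comp (continuous_snd.mul continuous_const))).aestronglyMeasurable)
    have := hasDerivAt_integral_of_dominated_loc_of_deriv_le (𝕜 := ℝ)
      (F := fun t (w : ℝ × ℝ) => H3 w.1 w.2 s₁ t • (P w * expJ (w.2 * x₂)))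
      (F' := fun t (w : ℝ × ℝ) => (-|w.2| * H3 w.1 w.2 s₁ t) • (P w * expJ (w.2 * x₂)))
      (x₀ := s₂) (s := Metric.ball s₂ (s₂ / 2)) (Metric.ball_mem_nhds s₂ hs2')
      (Eventually.of_forall hmeas) hint hF'meas ?_ hbound2 ?_
    · exact this
    · filter_upwards with w
      intro t ht
      have ht' : s₂ / 2 ≤ t := by
        have := abs_lt.1 (by simpa [Metric.mem_ball, Real.dist_eq] using ht)
        linarith [this.1]
      simp only [norm_smul, norm_mul, norm_expI, norm_expJ, norm_qj, Real.norm_eq_abs,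
        abs_mul, abs_neg, abs_abs, one_mul, mul_one]
      have hH3t : |H3 w.1 w.2 s₁ t| ≤ 4 * (Real.exp (-|w.1| * s₁) * Real.exp (-|w.2| * (s₂ / 2))) := by
        refine (H3_abs_le w.1 w.2 s₁ t).trans ?_
        have : Real.exp (-|w.2| * t) ≤ Real.exp (-|w.2| * (s₂ / 2)) := by
          apply Real.exp_le_exp.2
          nlinarith [abs_nonneg w.2]
        nlinarith [Real.exp_pos (-|w.1| * s₁), Real.exp_pos (-|w.2| * t)]
      calc |w.2| * |H3 w.1 w.2 s₁ t| * ‖P w‖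
          ≤ |w.2| * (4 * (Real.exp (-|w.1| * s₁) * Real.exp (-|w.2| * (s₂ / 2)))) * K := by
            refine mul_le_mul ?_ (hPle w) (norm_nonneg _) (by positivity)
            exact mul_le_mul_of_nonneg_left hH3t (abs_nonneg _)
        _ = (4 * K) * (Real.exp (-|w.1| * s₁) * (|w.2| * Real.exp (-|w.2| * (s₂ / 2)))) := by ring
    · filter_upwards with w
      intro t _
      exact (hasDerivAt_H3 w.1 w.2 s₁ t).smul_const (P w * expJ (w.2 * x₂))
  -- compute the two derivatives
  have hd1 : deriv (fun t => fQ f x₁ t s₁ s₂) x₂ = c • ∫ w : ℝ × ℝ, F₁' w := by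
    rw [funext hfQ1]
    exact (hD1.2.const_smul c).deriv
  have hd2 : deriv (fun t => fQ f x₁ x₂ s₁ t) s₂ = c • ∫ w : ℝ × ℝ, F₂' w := by
    rw [funext hfQ2]
    exact (hD2.2.const_smul c).deriv
  rw [hd1, hd2]
  -- pointwise cancellation
  have hzero : ∀ w : ℝ × ℝ, F₁' w = -(F₂' w * qj) := by
    intro w
    simp only [hF₁', hF₂']
    rcases lt_or_ge w.2 0 with h | h
    · rw [H3_of_neg w.1 h s₁ s₂]
      simp
    · rw [mul_smul_comm, smul_smul, smul_mul_assoc, ← neg_smul, mul_assoc]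
      rw [show -(-|w.2| * H3 w.1 w.2 s₁ s₂) = H3 w.1 w.2 s₁ s₂ * |w.2| by ring,
        abs_of_nonneg h]
      simp only [hP, mul_assoc]
  -- move qj out of the integral
  have hmulqj : (∫ w : ℝ × ℝ, F₂' w) * qj = ∫ w : ℝ × ℝ, F₂' w * qj := by
    have hL := (ContinuousLinearMap.integral_comp_comm
      ((ContinuousLinearMap.mul ℝ ℍ[ℝ]).flip qj) hD2.1).symm
    simpa using hL
  have hint1 : (∫ w : ℝ × ℝ, F₁' w) = -((∫ w : ℝ × ℝ, F₂' w) * qj) := by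
    rw [hmulqj, ← integral_neg]
    exact integral_congr_ae (Eventually.of_forall hzero)
  rw [hint1, smul_neg, smul_mul_assoc, neg_add_cancel]
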